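/- Let C ≥ 1, y ∈ {1,…,C}, α ≥ 0, Δ ∈ ℝ^C, and β ∈ ℝ^C with β_j ≥ 0 for all j. Define L : ℝ^C → ℝ by L(s) = α · ln( 1 + Σ_{j ≠ y} exp(β_j s_j − β_y s_y + Δ_j − Δ_y) ), and define p_y(s) = exp(β_y s_y + Δ_y) / Σ_{k=1}^C exp(β_k s_k + Δ_k). Then for every s ∈ ℝ^C, the Euclidean norm of the gradient of L at s satisfies ‖∇L(s)‖₂ ≤ α · √( β_y² + (Σ_{j ≠ y} β_j)² ) · (1 − p_y(s)). -/

import Mathlib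

open Finset

/-- **Gradient norm bound for the VS loss (Lemma 3, proof).** For the VS loss
`L s = α · ln(1 + ∑_{j ≠ y} exp(β j * s j - β y * s y + Δ j - Δ y))` on the Euclidean
space `ℝ^C`, with `α ≥ 0` and `β j ≥ 0`, the Euclidean norm of the gradient at any `s`
is at most `α · √(β y ^ 2 + (∑_{j ≠ y} β j) ^ 2) · (1 - p y s)`, where
`p y s = exp(β y * s y + Δ y) / ∑ k, exp(β k * s k + Δ k)`. -/
theorem vs_loss_gradient_norm_le (C : ℕ) (hC : 1 ≤ C) (y : Fin C)
    (α : ℝ) (hα : 0 ≤ α) (β Δ : Fin C → ℝ) (hβ : ∀ j, 0 ≤ β j) :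
    ∀ s : EuclideanSpace ℝ (Fin C),
      ‖gradient
          (fun s : EuclideanSpace ℝ (Fin C) =>
            α * Real.log
              (1 + ∑ j ∈ Finset.univ.erase y,
                Real.exp (β j * s j - β y * s y + Δ j - Δ y))) s‖ ≤
        α * Real.sqrt (β y ^ 2 + (∑ j ∈ Finset.univ.erase y, β j) ^ 2) *
          (1 - Real.exp (β y * s y + Δ y) / ∑ k, Real.exp (β k * s k + Δ k)) := by
  intro s
  obtain ⟨e, he⟩ : ∃ e : Fin C → ℝ,
      e = fun j => Real.exp (β j * s j - β y * s y + Δ j - Δ y) := ⟨_, rfl⟩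
  obtain ⟨T, hT⟩ : ∃ T : ℝ, T = ∑ j ∈ Finset.univ.erase y, e j := ⟨_, rfl⟩
  have hepos : ∀ j, 0 < e j := fun j => he ▸ Real.exp_pos _
  have hTnn : 0 ≤ T := hT ▸ Finset.sum_nonneg fun j _ => (hepos j).le
  have hP : (0:ℝ) < 1 + T := by linarith
  have hPne : (1:ℝ) + T ≠ 0 := ne_of_gt hP
  obtain ⟨g, hg⟩ : ∃ g : EuclideanSpace ℝ (Fin C),
      g = fun i => if i = y then -(α * β y * T) / (1 + T)
        else α * β i * e i / (1 + T) := ⟨WithLp.toLp 2 _, rfl⟩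
  have hgy : g y = -(α * β y * T) / (1 + T) := by rw [hg]; simp
  have hgi : ∀ i, i ≠ y → g i = α * β i * e i / (1 + T) := by
    intro i hi; rw [hg]; simp [hi]
  have hf : HasFDerivAt (fun s : EuclideanSpace ℝ (Fin C) =>
      α * Real.log (1 + ∑ j ∈ Finset.univ.erase y,
        Real.exp (β j * s j - β y * s y + Δ j - Δ y)))
      (α • ((1 + T)⁻¹ • ∑ j ∈ Finset.univ.erase y,
        e j • (β j • EuclideanSpace.proj j - β y • EuclideanSpace.proj y :
          EuclideanSpace ℝ (Fin C) →L[ℝ] ℝ))) s := by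
    have hsum : HasFDerivAt (fun s : EuclideanSpace ℝ (Fin C) =>
        ∑ j ∈ Finset.univ.erase y, Real.exp (β j * s j - β y * s y + Δ j - Δ y))
        (∑ j ∈ Finset.univ.erase y,
          e j • (β j • EuclideanSpace.proj j - β y • EuclideanSpace.proj y :
            EuclideanSpace ℝ (Fin C) →L[ℝ] ℝ)) s := by
      apply HasFDerivAt.fun_sum
      intro j _
      have h1 := (EuclideanSpace.proj (𝕜 := ℝ) j).hasFDerivAt (x := s)
      have h2 := (EuclideanSpace.proj (𝕜 := ℝ) y).hasFDerivAt (x := s)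
      have := ((((h1.const_mul (β j)).sub (h2.const_mul (β y))).add_const
        (Δ j)).sub_const (Δ y)).exp
      simpa [he] using this
    have h1T : (1:ℝ) + ∑ j ∈ Finset.univ.erase y,
        Real.exp (β j * s j - β y * s y + Δ j - Δ y) ≠ 0 := by
      rw [← he, ← hT]; exact hPne
    exact ((hsum.const_add 1).log h1T).const_mul α |>.congr_fderiv (by
      rw [← he, ← hT])
  have hgrad : HasGradientAt (fun s : EuclideanSpace ℝ (Fin C) =>
      α * Real.log (1 + ∑ j ∈ Finset.univ.erase y,
        Real.exp (β j * s j - β y * s y + Δ j - Δ y))) g s := by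
    rw [hasGradientAt_iff_hasFDerivAt]
    refine hf.congr_fderiv (Eq.symm ?_)
    apply ContinuousLinearMap.ext
    intro v
    rw [InnerProductSpace.toDual_apply_apply]
    simp only [ContinuousLinearMap.smul_apply, ContinuousLinearMap.sum_apply,
      ContinuousLinearMap.sub_apply, PiLp.proj_apply, smul_eq_mul]
    rw [PiLp.inner_apply]
    simp only [RCLike.inner_apply, conj_trivial, mul_comm (v _) (g _)]
    rw [← Finset.add_sum_erase _ _ (Finset.mem_univ y)]
    have h1 : ∑ i ∈ Finset.univ.erase y, g i * v i
        = ∑ i ∈ Finset.univ.erase y,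
            ((α * β i * e i / (1 + T) * v i - α * β y / (1 + T) * v y * e i)
            + α * β y / (1 + T) * v y * e i) := by
      refine Finset.sum_congr rfl fun i hi => ?_
      rw [hgi i (Finset.ne_of_mem_erase hi)]
      ring
    calc g y * v y + ∑ i ∈ Finset.univ.erase y, g i * v i
        = ∑ i ∈ Finset.univ.erase y,
            (α * β i * e i / (1 + T) * v i - α * β y / (1 + T) * v y * e i) := by
          rw [h1, Finset.sum_add_distrib, ← Finset.mul_sum, ← hT, hgy]
          ring
      _ = α * ((1 + T)⁻¹ * ∑ i ∈ Finset.univ.erase y,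
            e i * (β i * v i - β y * v y)) := by
          rw [Finset.mul_sum, Finset.mul_sum]
          refine Finset.sum_congr rfl fun i _ => ?_
          field_simp
  rw [hgrad.gradient]
  obtain ⟨S, hS⟩ : ∃ S : ℝ, S = ∑ j ∈ Finset.univ.erase y, β j := ⟨_, rfl⟩
  rw [← hS]
  have hSnn : 0 ≤ S := hS ▸ Finset.sum_nonneg fun j _ => hβ j
  have hdenom : ∑ k, Real.exp (β k * s k + Δ k)
      = Real.exp (β y * s y + Δ y) * (1 + T) := by
    rw [mul_add, mul_one, hT, Finset.mul_sum,
      ← Finset.add_sum_erase _ _ (Finset.mem_univ y)]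
    congr 1
    refine Finset.sum_congr rfl fun j _ => ?_
    rw [he, ← Real.exp_add]
    ring_nf
  have hp : 1 - Real.exp (β y * s y + Δ y) / ∑ k, Real.exp (β k * s k + Δ k)
      = T / (1 + T) := by
    rw [hdenom]
    field_simp
    ring
  rw [hp]
  rw [EuclideanSpace.norm_eq]
  have hsq : ∑ i, ‖g i‖ ^ 2 ≤ (α * Real.sqrt (β y ^ 2 + S ^ 2) * (T / (1 + T))) ^ 2 := by
    have hgy2 : ‖g y‖ ^ 2 = (α * β y * T) ^ 2 / (1 + T) ^ 2 := by
      rw [hgy, Real.norm_eq_abs, sq_abs, neg_div, neg_sq, div_pow]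
    have hkey : ∑ i ∈ Finset.univ.erase y, ‖g i‖ ^ 2
        ≤ (α * S * T) ^ 2 / (1 + T) ^ 2 := by
      have h1 : ∑ i ∈ Finset.univ.erase y, ‖g i‖ ^ 2
          = ∑ i ∈ Finset.univ.erase y, (α * β i * e i / (1 + T)) ^ 2 := by
        refine Finset.sum_congr rfl fun i hi => ?_
        rw [hgi i (Finset.ne_of_mem_erase hi), Real.norm_eq_abs, sq_abs]
      rw [h1]
      have hterm_nn : ∀ i ∈ Finset.univ.erase y,
          0 ≤ α * β i * e i / (1 + T) := fun i _ =>
        div_nonneg (mul_nonneg (mul_nonneg hα (hβ i)) (hepos i).le) hP.le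
      have h2 : ∑ i ∈ Finset.univ.erase y, (α * β i * e i / (1 + T)) ^ 2
          ≤ (∑ i ∈ Finset.univ.erase y, α * β i * e i / (1 + T)) ^ 2 :=
        Finset.sum_sq_le_sq_sum_of_nonneg hterm_nn
      refine h2.trans ?_
      have h3 : ∑ i ∈ Finset.univ.erase y, α * β i * e i / (1 + T)
          ≤ α * S * T / (1 + T) := by
        rw [← Finset.sum_div]
        apply div_le_div_of_nonneg_right ?_ hP.le
        calc ∑ i ∈ Finset.univ.erase y, α * β i * e i
            ≤ ∑ i ∈ Finset.univ.erase y, α * β i * T := by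
              refine Finset.sum_le_sum fun i hi => ?_
              have hie : e i ≤ T := hT ▸ Finset.single_le_sum (f := e)
                (fun j _ => (hepos j).le) hi
              exact mul_le_mul_of_nonneg_left hie (mul_nonneg hα (hβ i))
          _ = α * S * T := by
              rw [hS, Finset.mul_sum, Finset.sum_mul]
      have hnn : 0 ≤ ∑ i ∈ Finset.univ.erase y, α * β i * e i / (1 + T) :=
        Finset.sum_nonneg hterm_nn
      calc (∑ i ∈ Finset.univ.erase y, α * β i * e i / (1 + T)) ^ 2
          ≤ (α * S * T / (1 + T)) ^ 2 := pow_le_pow_left₀ hnn h3 2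
        _ = (α * S * T) ^ 2 / (1 + T) ^ 2 := div_pow _ _ _
    have split : ∑ i, ‖g i‖ ^ 2
        = ‖g y‖ ^ 2 + ∑ i ∈ Finset.univ.erase y, ‖g i‖ ^ 2 :=
      (Finset.add_sum_erase _ _ (Finset.mem_univ y)).symm
    have expand : (α * Real.sqrt (β y ^ 2 + S ^ 2) * (T / (1 + T))) ^ 2
        = ((α * β y * T) ^ 2 + (α * S * T) ^ 2) / (1 + T) ^ 2 := by
      rw [mul_pow, mul_pow, Real.sq_sqrt (by positivity), div_pow]
      ring
    rw [split, hgy2, expand, add_div]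
    linarith [hkey]
  have hrhs_nn : 0 ≤ α * Real.sqrt (β y ^ 2 + S ^ 2) * (T / (1 + T)) := by positivity
  calc Real.sqrt (∑ i, ‖g i‖ ^ 2)
      ≤ Real.sqrt ((α * Real.sqrt (β y ^ 2 + S ^ 2) * (T / (1 + T))) ^ 2) :=
        Real.sqrt_le_sqrt hsq
    _ = α * Real.sqrt (β y ^ 2 + S ^ 2) * (T / (1 + T)) := Real.sqrt_sq hrhs_nn
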